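/- arXiv:math/0211197 — 2 statements merged into one kernel-verified Lean document; each statement's English description precedes it below -/
import Mathlib

section
/- Let n ≥ 2. The canonical monoid homomorphism from the braid monoid B_n^+ (presented as a monoid by generators σ_1, …, σ_{n−1} and the braid relations) to the Artin braid group B_n, sending each monoid generator σ_i to the group generator σ_i, is injective. Equivalently (Garside), any two positive braid words that represent the same element of B_n are positively equivalent, i.e., they represent the same element of the presented monoid. -/
/-- The braid relations on the free group on `m` generators, as relator words:
`σᵢσⱼσᵢ⁻¹σⱼ⁻¹` for `|i - j| ≥ 2` and `σᵢσⱼσᵢ(σⱼσᵢσⱼ)⁻¹` for `j = i + 1`. -/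
def braidRels (m : ℕ) : Set (FreeGroup (Fin m)) :=
  { r | ∃ i j : Fin m,
      ((i : ℕ) + 2 ≤ (j : ℕ) ∧
        r = .of i * .of j * (.of i)⁻¹ * (.of j)⁻¹) ∨
      ((j : ℕ) = (i : ℕ) + 1 ∧
        r = .of i * .of j * .of i * (.of j * .of i * .of j)⁻¹) }

/-- The Artin braid group `B_n`, presented over `Fin (n - 1)`. -/
def BraidGroup (n : ℕ) : Type := PresentedGroup (braidRels (n - 1))

instance (n : ℕ) : Group (BraidGroup n) := by unfold BraidGroup; infer_instance

/-- The standard Artin generator `σ_{i+1}` (0-indexed by `i : Fin (n - 1)`,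
so `braidGen n ⟨0, _⟩` is `σ_1`). -/
def braidGen (n : ℕ) (i : Fin (n - 1)) : BraidGroup n := PresentedGroup.of i

/-- The braid relations on the free monoid on `m` generators:
`σᵢσⱼ = σⱼσᵢ` for `|i - j| ≥ 2` and `σᵢσⱼσᵢ = σⱼσᵢσⱼ` for `j = i + 1`. -/
def braidMonoidRels (m : ℕ) : FreeMonoid (Fin m) → FreeMonoid (Fin m) → Prop :=
  fun a b => ∃ i j : Fin m,
    ((i : ℕ) + 2 ≤ (j : ℕ) ∧ a = .of i * .of j ∧ b = .of j * .of i) ∨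
    ((j : ℕ) = (i : ℕ) + 1 ∧ a = .of i * .of j * .of i ∧ b = .of j * .of i * .of j)

/-- The braid monoid `B_n⁺`, presented over `Fin (n - 1)`. -/
def BraidMonoid (n : ℕ) : Type := PresentedMonoid (braidMonoidRels (n - 1))

instance (n : ℕ) : Monoid (BraidMonoid n) := by unfold BraidMonoid; infer_instance

/-- The positive generator `σ_{i+1}` of the braid monoid (0-indexed by `i : Fin (n - 1)`). -/
def braidMonGen (n : ℕ) (i : Fin (n - 1)) : BraidMonoid n :=
  PresentedMonoid.of (braidMonoidRels (n - 1)) i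


namespace Braid

def far (i j : ℕ) : Prop := i + 2 ≤ j ∨ j + 2 ≤ i
def near (i j : ℕ) : Prop := i + 1 = j ∨ j + 1 = i

lemma far.symm {i j : ℕ} (h : far i j) : far j i := h.elim .inr .inl
lemma near.symm {i j : ℕ} (h : near i j) : near j i := h.elim .inr .inl
lemma far.ne {i j : ℕ} (h : far i j) : i ≠ j := by rcases h with h|h <;> omega
lemma near.ne {i j : ℕ} (h : near i j) : i ≠ j := by rcases h with h|h <;> omega
lemma not_near_of_far {i j : ℕ} (h : far i j) : ¬ near i j := by
  rcases h with h|h <;> rintro (h'|h') <;> omega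
lemma far_or_near {i j : ℕ} (h : i ≠ j) : far i j ∨ near i j := by
  rcases Nat.lt_or_ge i j with h'|h' <;> [skip; skip] <;> unfold far near <;> omega

def brel (a b : List ℕ) : Prop :=
  ∃ i j, (far i j ∧ a = [i,j] ∧ b = [j,i]) ∨ (near i j ∧ a = [i,j,i] ∧ b = [j,i,j])

def bstep (u v : List ℕ) : Prop :=
  ∃ p a b q, brel a b ∧ u = p ++ a ++ q ∧ v = p ++ b ++ q

def beq : List ℕ → List ℕ → Prop := Relation.ReflTransGen bstep

lemma brel.symm {a b : List ℕ} (h : brel a b) : brel b a := by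
  obtain ⟨i, j, ⟨hf, ha, hb⟩|⟨hn, ha, hb⟩⟩ := h
  · exact ⟨j, i, .inl ⟨hf.symm, hb, ha⟩⟩
  · exact ⟨j, i, .inr ⟨hn.symm, hb, ha⟩⟩

lemma bstep.symm {u v : List ℕ} (h : bstep u v) : bstep v u := by
  obtain ⟨p, a, b, q, hr, hu, hv⟩ := h
  exact ⟨p, b, a, q, hr.symm, hv, hu⟩

lemma beq.refl (u : List ℕ) : beq u u := Relation.ReflTransGen.refl

lemma beq.rfl {u : List ℕ} : beq u u := Relation.ReflTransGen.refl

lemma beq.trans {u v w : List ℕ} (h : beq u v) (h' : beq v w) : beq u w :=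
  Relation.ReflTransGen.trans h h'

lemma bstep.beq {u v : List ℕ} (h : bstep u v) : beq u v :=
  Relation.ReflTransGen.single h

lemma beq.symm {u v : List ℕ} (h : beq u v) : beq v u := by
  induction h with
  | refl => exact .rfl
  | tail _ h2 ih => exact .trans h2.symm.beq ih

lemma bstep.append_left {u v : List ℕ} (h : bstep u v) (t : List ℕ) :
    bstep (t ++ u) (t ++ v) := by
  obtain ⟨p, a, b, q, hr, hu, hv⟩ := h
  exact ⟨t ++ p, a, b, q, hr, by simp [hu], by simp [hv]⟩

lemma bstep.append_right {u v : List ℕ} (h : bstep u v) (t : List ℕ) :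
    bstep (u ++ t) (v ++ t) := by
  obtain ⟨p, a, b, q, hr, hu, hv⟩ := h
  exact ⟨p, a, b, q ++ t, hr, by simp [hu], by simp [hv]⟩

lemma beq.append_left {u v : List ℕ} (h : beq u v) (t : List ℕ) : beq (t ++ u) (t ++ v) := by
  induction h with
  | refl => exact .rfl
  | tail _ h2 ih => exact ih.trans (h2.append_left t).beq

lemma beq.append_right {u v : List ℕ} (h : beq u v) (t : List ℕ) : beq (u ++ t) (v ++ t) := by
  induction h with
  | refl => exact .rfl
  | tail _ h2 ih => exact ih.trans (h2.append_right t).beq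

lemma beq.append {u v x y : List ℕ} (h : beq u v) (h' : beq x y) : beq (u ++ x) (v ++ y) :=
  (h.append_right x).trans (h'.append_left v)

lemma beq.cons {u v : List ℕ} (a : ℕ) (h : beq u v) : beq (a :: u) (a :: v) :=
  h.append_left [a]

lemma brel.length {a b : List ℕ} (h : brel a b) : a.length = b.length := by
  obtain ⟨i, j, ⟨_, ha, hb⟩|⟨_, ha, hb⟩⟩ := h <;> simp [ha, hb]

lemma bstep.length {u v : List ℕ} (h : bstep u v) : u.length = v.length := by
  obtain ⟨p, a, b, q, hr, hu, hv⟩ := h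
  simp [hu, hv, hr.length]

lemma beq.length {u v : List ℕ} (h : beq u v) : u.length = v.length := by
  induction h with
  | refl => rfl
  | tail _ h2 ih => exact ih.trans h2.length

lemma brel.mem {a b : List ℕ} (h : brel a b) {x : ℕ} (hx : x ∈ b) : x ∈ a := by
  obtain ⟨i, j, ⟨_, ha, hb⟩|⟨_, ha, hb⟩⟩ := h <;> subst ha hb <;> simp at hx ⊢ <;> tauto

lemma bstep.mem {u v : List ℕ} (h : bstep u v) {x : ℕ} (hx : x ∈ v) : x ∈ u := by
  obtain ⟨p, a, b, q, hr, hu, hv⟩ := h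
  subst hu hv
  simp only [List.mem_append] at hx ⊢
  rcases hx with (h|h)|h
  · exact .inl (.inl h)
  · exact .inl (.inr (hr.mem h))
  · exact .inr h

lemma beq.mem {u v : List ℕ} (h : beq u v) {x : ℕ} (hx : x ∈ v) : x ∈ u := by
  induction h with
  | refl => exact hx
  | tail _ h2 ih => exact ih (h2.mem hx)

/-- single swap at head -/
lemma beq.swap {i j : ℕ} (h : far i j) (t : List ℕ) : beq (i :: j :: t) (j :: i :: t) :=
  bstep.beq ⟨[], [i,j], [j,i], t, ⟨i, j, .inl ⟨h, Eq.refl _, Eq.refl _⟩⟩, Eq.refl _, Eq.refl _⟩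

/-- single braid move at head -/
lemma beq.braid {i j : ℕ} (h : near i j) (t : List ℕ) :
    beq (i :: j :: i :: t) (j :: i :: j :: t) :=
  bstep.beq ⟨[], [i,j,i], [j,i,j], t, ⟨i, j, .inr ⟨h, Eq.refl _, Eq.refl _⟩⟩, Eq.refl _, Eq.refl _⟩

/-- commuting a letter past a list of far letters -/
lemma beq.far_all {c : ℕ} {l : List ℕ} (h : ∀ x ∈ l, far c x) (t : List ℕ) :
    beq (c :: (l ++ t)) (l ++ c :: t) := by
  induction l generalizing t with
  | nil => exact .rfl
  | cons x l ih =>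
    refine (beq.swap (h x (by simp)) _).trans ?_
    exact (ih (fun y hy => h y (by simp [hy])) t).cons x


/-- decidability helper -/
instance (i j : ℕ) : Decidable (near i j) := by unfold near; infer_instance

/-- the tail of the lcm of `σᵢ, σⱼ` (for `i ≠ j`): `σᵢ * T i j` is the lcm. -/
def T (i j : ℕ) : List ℕ := if near i j then [j, i] else [j]

lemma T_far {i j : ℕ} (h : far i j) : T i j = [j] := by
  simp [T, not_near_of_far h]

lemma T_near {i j : ℕ} (h : near i j) : T i j = [j, i] := by simp [T, h]

lemma beq.Drel {i j : ℕ} (h : i ≠ j) (t : List ℕ) :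
    beq (i :: (T i j ++ t)) (j :: (T j i ++ t)) := by
  rcases far_or_near h with hf|hn
  · rw [T_far hf, T_far hf.symm]; exact beq.swap hf t
  · rw [T_near hn, T_near hn.symm]; exact beq.braid hn t

/-- conclusion of the key lemma -/
def KLC (i j : ℕ) (u v : List ℕ) : Prop :=
  (i = j ∧ beq u v) ∨ (i ≠ j ∧ ∃ w, beq u (T i j ++ w) ∧ beq v (T j i ++ w))

lemma KLC.symm {i j : ℕ} {u v : List ℕ} (h : KLC i j u v) : KLC j i v u := by
  rcases h with ⟨he, hb⟩|⟨hne, w, h1, h2⟩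
  · exact .inl ⟨he.symm, hb.symm⟩
  · exact .inr ⟨hne.symm, w, h2, h1⟩

lemma KLC.congr {i j : ℕ} {u u' v v' : List ℕ} (h : KLC i j u v) (hu : beq u u')
    (hv : beq v v') : KLC i j u' v' := by
  rcases h with ⟨he, hb⟩|⟨hne, w, h1, h2⟩
  · exact .inl ⟨he, (hu.symm.trans hb).trans hv⟩
  · exact .inr ⟨hne, w, hu.symm.trans h1, hv.symm.trans h2⟩

lemma brel.reverse {a b : List ℕ} (h : brel a b) : brel a.reverse b.reverse := by
  obtain ⟨i, j, ⟨hf, ha, hb⟩|⟨hn, ha, hb⟩⟩ := h <;> subst ha hb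
  · exact ⟨j, i, .inl ⟨hf.symm, by simp, by simp⟩⟩
  · exact ⟨i, j, .inr ⟨hn, by simp [List.reverse_cons], by simp [List.reverse_cons]⟩⟩

lemma bstep.reverse {u v : List ℕ} (h : bstep u v) : bstep u.reverse v.reverse := by
  obtain ⟨p, a, b, q, hr, hu, hv⟩ := h
  exact ⟨q.reverse, a.reverse, b.reverse, p.reverse, hr.reverse, by simp [hu], by simp [hv]⟩

lemma beq.reverse {u v : List ℕ} (h : beq u v) : beq u.reverse v.reverse := by
  induction h with
  | refl => exact .rfl
  | tail _ h2 ih => exact ih.trans h2.reverse.beq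



lemma T_mem {i j c : ℕ} (hci : far c i) (hcj : far c j) : ∀ x ∈ T i j, far c x := by
  intro x hx
  unfold T at hx
  split at hx <;> simp at hx
  · rcases hx with rfl|rfl
    exacts [hcj, hci]
  · rw [hx]; exact hcj

theorem keyAux : ∀ N : ℕ, ∀ u v : List ℕ, u.length ≤ N → beq u v →
    ∀ i u' j v', u = i :: u' → v = j :: v' → KLC i j u' v' := by
  intro N
  induction N with
  | zero =>
    intro u v hlen _ i u' j v' hu _
    subst hu; simp at hlen
  | succ N ih =>
    have shortCancel : ∀ (i : ℕ) (x y : List ℕ), x.length < N → beq (i::x) (i::y) → beq x y := by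
      intro i x y hx h
      rcases ih (i::x) (i::y) (by simp; omega) h i x i y rfl rfl with ⟨_, hb⟩|⟨hne, _⟩
      · exact hb
      · exact absurd rfl hne
    have shortLcm : ∀ (i j : ℕ) (x y : List ℕ), i ≠ j → x.length < N → beq (i::x) (j::y) →
        ∃ w, beq x (T i j ++ w) ∧ beq y (T j i ++ w) := by
      intro i j x y hne hx h
      rcases ih (i::x) (j::y) (by simp; omega) h i x j y rfl rfl with ⟨he, _⟩|⟨_, w, h1, h2⟩
      · exact absurd he hne
      · exact ⟨w, h1, h2⟩
    intro u v hlen hb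
    revert hlen
    induction hb using Relation.ReflTransGen.head_induction_on with
    | refl =>
      intro _ i u' j v' hu hv
      rw [hu] at hv
      obtain ⟨rfl, rfl⟩ := List.cons.inj hv
      exact .inl ⟨rfl, .rfl⟩
    | head hst hch ihc =>
      rename_i u w₁
      intro hlen i u' j v' hu hv
      obtain ⟨p, a, b, q, hr, hupq, hw1⟩ := hst
      cases p with
      | cons x p' =>
        rw [hu] at hupq
        simp only [List.cons_append, List.append_assoc] at hupq hw1
        obtain ⟨rfl, hu2⟩ := List.cons.inj hupq
        have hstep' : bstep u' (p' ++ (b ++ q)) :=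
          ⟨p', a, b, q, hr, by rw [hu2]; simp, by simp⟩
        have hlen2 : w₁.length ≤ N + 1 := by
          rw [hw1]; rw [hu, hu2] at hlen
          simp only [List.length_append, List.length_cons] at hlen ⊢
          rw [← hr.length]; omega
        have hres := ihc hlen2 i (p' ++ (b ++ q)) j v' hw1 hv
        exact (hres.symm.congr .rfl hstep'.beq.symm).symm
      | nil =>
        subst hu hv
        obtain ⟨i₀, j₀, ⟨hf, rfl, rfl⟩|⟨hn, rfl, rfl⟩⟩ := hr
        · -- far case : u = i₀ :: j₀ :: q
          simp only [List.nil_append, List.cons_append] at hupq hw1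
          obtain ⟨rfl, hu'⟩ := List.cons.inj hupq
          subst hu'
          have hlq : q.length + 2 ≤ N + 1 := by simpa using hlen
          have hres := ihc (by rw [hw1]; simp; omega) j₀ (i::q) j v' (by simp [hw1]) rfl
          rcases hres with ⟨rfl, hbv⟩|⟨hne0, w₁', h1, h2⟩
          · refine .inr ⟨hf.ne, q, ?_, ?_⟩
            · rw [T_far hf]; exact .rfl
            · rw [T_far hf.symm]; exact hbv.symm
          · rcases far_or_near hne0 with hf0|hn0
            · -- (1a) far j₀ j
              rw [T_far hf0] at h1
              rw [T_far hf0.symm] at h2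
              by_cases hij : i = j
              · subst hij
                have hq := shortCancel i q w₁' (by omega) h1
                exact .inl ⟨rfl, (hq.cons j₀).trans h2.symm⟩
              · obtain ⟨z, hz1, hz2⟩ := shortLcm i j q w₁' hij (by omega) h1
                refine .inr ⟨hij, j₀::z, ?_, ?_⟩
                · exact (hz1.cons j₀).trans (beq.far_all (T_mem hf.symm hf0) z)
                · exact h2.trans ((hz2.cons j₀).trans (beq.far_all (T_mem hf0 hf.symm) z))
            · -- (1b) near j₀ j
              rw [T_near hn0] at h1
              rw [T_near hn0.symm] at h2
              have hij : i ≠ j := by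
                rintro rfl; exact (not_near_of_far hf) hn0.symm
              obtain ⟨z, hz1, hz2⟩ := shortLcm i j q (j₀::w₁') hij (by omega) h1
              have hlw := h1.length; simp at hlw
              rcases far_or_near hij with hfij|hnij
              · -- far i j
                rw [T_far hfij] at hz1
                rw [T_far hfij.symm] at hz2
                obtain ⟨y, hy1, hy2⟩ := shortLcm j₀ i w₁' z hf.symm.ne (by omega) hz2
                rw [T_far hf.symm] at hy1
                rw [T_far hf] at hy2
                refine .inr ⟨hij, j₀::j::y, ?_, ?_⟩
                · rw [T_far hfij]
                  exact ((hz1.cons j₀).trans ((hy2.cons j).cons j₀)).trans (beq.braid hn0 y)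
                · rw [T_far hfij.symm]
                  refine (h2.trans ((hy1.cons j).cons j₀)).trans ?_
                  refine beq.symm (beq.far_all (l := [j₀, j]) ?_ y)
                  intro x hx
                  simp only [List.mem_cons, List.not_mem_nil, or_false] at hx
                  rcases hx with rfl|rfl
                  exacts [hf, hfij]
              · -- near i j : i, j₀ opposite neighbors of j
                rw [T_near hnij] at hz1
                rw [T_near hnij.symm] at hz2
                obtain ⟨y, hy1, hy2⟩ := shortLcm j₀ i w₁' (j::z) hf.symm.ne (by omega) hz2
                rw [T_far hf.symm] at hy1
                rw [T_far hf] at hy2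
                have hlz := hz1.length; simp at hlz
                obtain ⟨t, ht1, ht2⟩ := shortLcm j j₀ z y hn0.symm.ne (by omega) hy2
                rw [T_near hn0.symm] at ht1
                rw [T_near hn0] at ht2
                refine .inr ⟨hij, j₀::j::i::t, ?_, ?_⟩
                · rw [T_near hnij]
                  refine ((hz1.cons j₀).trans (((ht1.cons i).cons j).cons j₀)).trans ?_
                  refine (((beq.swap hf (j::t)).cons j).cons j₀).trans ?_
                  refine (beq.braid hn0 (i::j::t)).trans ?_
                  refine (((beq.braid hnij.symm t).cons j₀).cons j).trans ?_
                  exact (beq.swap hf.symm (j::i::t)).cons j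
                · rw [T_near hnij.symm]
                  refine (h2.trans ((hy1.cons j).cons j₀)).trans ?_
                  refine ((((ht2.cons i).cons j).cons j₀)).trans ?_
                  refine ((beq.braid hnij.symm (j₀::t)).cons j₀).trans ?_
                  refine (beq.swap hf.symm (j::i::j₀::t)).trans ?_
                  refine ((((beq.swap hf t).cons j).cons j₀).cons i).trans ?_
                  exact (beq.braid hn0 (i::t)).cons i
        · -- near case : u = i₀ :: j₀ :: i₀ :: q
          simp only [List.nil_append, List.cons_append] at hupq hw1
          obtain ⟨rfl, hu'⟩ := List.cons.inj hupq
          subst hu'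
          have hlq : q.length + 3 ≤ N + 1 := by simp at hlen; omega
          have hres := ihc (by rw [hw1]; simp; omega) j₀ (i::j₀::q) j v' (by simp [hw1]) rfl
          rcases hres with ⟨rfl, hbv⟩|⟨hne0, w₁', h1, h2⟩
          · refine .inr ⟨hn.ne, q, ?_, ?_⟩
            · rw [T_near hn]; exact .rfl
            · rw [T_near hn.symm]; exact hbv.symm
          · rcases far_or_near hne0 with hf0|hn0
            · -- (2a) far j₀ j
              rw [T_far hf0] at h1
              rw [T_far hf0.symm] at h2
              have hij : i ≠ j := by
                rintro rfl; exact (not_near_of_far hf0.symm) hn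
              obtain ⟨z, hz1, hz2⟩ := shortLcm i j (j₀::q) w₁' hij (by simp; omega) h1
              have hlw := h1.length; simp at hlw
              rcases far_or_near hij with hfij|hnij
              · -- far i j
                rw [T_far hfij] at hz1
                rw [T_far hfij.symm] at hz2
                obtain ⟨y, hy1, hy2⟩ := shortLcm j₀ j q z hne0 (by omega) hz1
                rw [T_far hf0] at hy1
                rw [T_far hf0.symm] at hy2
                refine .inr ⟨hij, j₀::i::y, ?_, ?_⟩
                · rw [T_far hfij]
                  refine ((hy1.cons i).cons j₀).trans ?_
                  refine ((beq.swap hfij y).cons j₀).trans ?_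
                  exact beq.swap hf0 (i::y)
                · rw [T_far hfij.symm]
                  refine (h2.trans (hz2.cons j₀)).trans ?_
                  refine ((hy2.cons i).cons j₀).trans ?_
                  exact beq.braid hn.symm y
              · -- near i j : j₀ and j opposite neighbors of i
                rw [T_near hnij] at hz1
                rw [T_near hnij.symm] at hz2
                obtain ⟨y, hy1, hy2⟩ := shortLcm j₀ j q (i::z) hne0 (by omega) hz1
                rw [T_far hf0] at hy1
                rw [T_far hf0.symm] at hy2
                have hlz := hz1.length; simp at hlz
                obtain ⟨t, ht1, ht2⟩ := shortLcm i j₀ z y hn.ne (by omega) hy2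
                rw [T_near hn] at ht1
                rw [T_near hn.symm] at ht2
                refine .inr ⟨hij, j₀::i::j::t, ?_, ?_⟩
                · rw [T_near hnij]
                  -- j₀::i::q ≡ j₀::i::j::i::j₀::t ≡ ... ≡ j::i::j₀::i::j::t
                  refine ((hy1.cons i).cons j₀).trans ?_
                  refine (((ht2.cons j).cons i).cons j₀).trans ?_
                  refine ((beq.braid hnij (j₀::t)).cons j₀).trans ?_
                  refine ((((beq.swap hf0.symm t).cons i).cons j).cons j₀).trans ?_
                  refine (beq.swap hf0 (i::j₀::j::t)).trans ?_
                  exact (beq.braid hn.symm (j::t)).cons j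
                · rw [T_near hnij.symm]
                  -- v' ≡ j₀::i::j::j₀::i::t ≡ ... ≡ i::j::j₀::i::j::t
                  refine (h2.trans (hz2.cons j₀)).trans ?_
                  refine (((ht1.cons j).cons i).cons j₀).trans ?_
                  refine (((beq.swap hf0.symm (i::t)).cons i).cons j₀).trans ?_
                  refine (beq.braid hn.symm (j::i::t)).trans ?_
                  refine (((beq.braid hnij t).cons j₀).cons i).trans ?_
                  exact (beq.swap hf0 (i::j::t)).cons i
            · -- (2b) near j₀ j : chain i - j₀ - j
              rw [T_near hn0] at h1
              rw [T_near hn0.symm] at h2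
              have hlw := h1.length; simp at hlw
              by_cases hij : i = j
              · subst hij
                have hq1 := shortCancel i (j₀::q) (j₀::w₁') (by simp; omega) h1
                have hq := shortCancel j₀ q w₁' (by omega) hq1
                exact .inl ⟨rfl, ((hq.cons i).cons j₀).trans h2.symm⟩
              · have hfij : far i j := by
                  unfold near at hn hn0; unfold far; omega
                obtain ⟨z, hz1, hz2⟩ := shortLcm i j (j₀::q) (j₀::w₁') hij (by simp; omega) h1
                rw [T_far hfij] at hz1
                rw [T_far hfij.symm] at hz2
                have hlz := hz1.length; simp at hlz
                obtain ⟨y, hy1, hy2⟩ := shortLcm j₀ j q z hne0 (by omega) hz1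
                rw [T_near hn0] at hy1
                rw [T_near hn0.symm] at hy2
                obtain ⟨t, ht1, ht2⟩ := shortLcm j₀ i w₁' z hn.symm.ne (by omega) hz2
                rw [T_near hn.symm] at ht1
                rw [T_near hn] at ht2
                have hly := hy1.length
                simp only [List.length_cons, List.length_append] at hly
                have hyt := shortCancel j₀ (j::y) (i::t) (by
                  simp only [List.length_cons]; omega) (hy2.symm.trans ht2)
                obtain ⟨s, hs1, hs2⟩ := shortLcm j i y t (Ne.symm hij) (by omega) hyt
                rw [T_far hfij.symm] at hs1
                rw [T_far hfij] at hs2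
                refine .inr ⟨hij, j₀::j::i::j₀::s, ?_, ?_⟩
                · rw [T_far hfij]
                  -- j₀::i::q ≡ j₀::i::j::j₀::i::s ≡ ... ≡ j::j₀::j::i::j₀::s
                  refine ((hy1.cons i).cons j₀).trans ?_
                  refine ((((hs1.cons j₀).cons j).cons i).cons j₀).trans ?_
                  refine ((beq.swap hfij (j₀::i::s)).cons j₀).trans ?_
                  refine (((beq.braid hn s).cons j).cons j₀).trans ?_
                  exact beq.braid hn0 (i::j₀::s)
                · rw [T_far hfij.symm]
                  -- v' ≡ j₀::j::i::j₀::j::s ≡ ... ≡ i::j₀::j::i::j₀::s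
                  refine (h2.trans ((ht1.cons j).cons j₀)).trans ?_
                  refine ((((hs2.cons j₀).cons i).cons j).cons j₀).trans ?_
                  refine ((beq.swap hfij.symm (j₀::j::s)).cons j₀).trans ?_
                  refine (((beq.braid hn0.symm s).cons i).cons j₀).trans ?_
                  refine (beq.braid hn.symm (j::j₀::s)).trans ?_
                  exact ((beq.swap hfij (j₀::s)).cons j₀).cons i



/-! ### Cancellation -/

lemma beq.cancel_cons {i : ℕ} {u v : List ℕ} (h : beq (i::u) (i::v)) : beq u v := by
  rcases keyAux (i::u).length (i::u) (i::v) le_rfl h i u i v (Eq.refl _) (Eq.refl _) with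
    ⟨_, hb⟩|⟨hne, _⟩
  exacts [hb, absurd (Eq.refl i) hne]

lemma beq.lcm {i j : ℕ} {u v : List ℕ} (hne : i ≠ j) (h : beq (i::u) (j::v)) :
    ∃ w, beq u (T i j ++ w) ∧ beq v (T j i ++ w) := by
  rcases keyAux (i::u).length (i::u) (j::v) le_rfl h i u j v (Eq.refl _) (Eq.refl _) with
    ⟨he, _⟩|⟨_, w, h1, h2⟩
  exacts [absurd he hne, ⟨w, h1, h2⟩]

lemma beq.cancel_left {a u v : List ℕ} (h : beq (a ++ u) (a ++ v)) : beq u v := by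
  induction a with
  | nil => exact h
  | cons x a ih => exact ih (beq.cancel_cons (i := x) (by simpa using h))

lemma beq.cancel_right {a u v : List ℕ} (h : beq (u ++ a) (v ++ a)) : beq u v := by
  have := h.reverse
  simp only [List.reverse_append] at this
  have := beq.cancel_left this
  simpa using this.reverse

/-! ### The Garside element -/

/-- descending run `[s+k-1, ..., s+1, s]` -/
def runS (s : ℕ) : ℕ → List ℕ
  | 0 => []
  | k+1 => (s+k) :: runS s k

/-- ascending run `[s, s+1, ..., s+k-1]` -/
def ascS (s : ℕ) : ℕ → List ℕ
  | 0 => []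
  | k+1 => s :: ascS (s+1) k

/-- the Garside element Δ on the letters `0, ..., m-1` -/
def delta : ℕ → List ℕ
  | 0 => []
  | m+1 => delta m ++ runS 0 (m+1)

lemma mem_runS {s k x : ℕ} (h : x ∈ runS s k) : s ≤ x ∧ x < s + k := by
  induction k with
  | zero => simp [runS] at h
  | succ k ih =>
    rcases (by simpa [runS] using h : x = s + k ∨ x ∈ runS s k) with rfl|h
    · omega
    · have := ih h; omega

lemma mem_ascS {s k x : ℕ} (h : x ∈ ascS s k) : s ≤ x ∧ x < s + k := by
  induction k generalizing s with
  | zero => simp [ascS] at h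
  | succ k ih =>
    rcases (by simpa [ascS] using h : x = s ∨ x ∈ ascS (s+1) k) with rfl|h
    · omega
    · have := ih h; omega

lemma mem_delta {m x : ℕ} (h : x ∈ delta m) : x < m := by
  induction m with
  | zero => simp [delta] at h
  | succ m ih =>
    rcases (by simpa [delta] using h : x ∈ delta m ∨ x ∈ runS 0 (m+1)) with h|h
    · have := ih h; omega
    · have := mem_runS h; omega

lemma runS_succ' (s k : ℕ) : runS s (k+1) = runS (s+1) k ++ [s] := by
  induction k generalizing s with
  | zero => simp [runS]
  | succ k ih =>
    show (s+(k+1)) :: runS s (k+1) = ((s+1+k) :: runS (s+1) k) ++ [s]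
    rw [ih, List.cons_append]
    have h : s + (k+1) = s+1+k := by omega
    rw [h]

lemma ascS_succ' (s k : ℕ) : ascS s (k+1) = ascS s k ++ [s+k] := by
  induction k generalizing s with
  | zero => simp [ascS]
  | succ k ih =>
    show s :: ascS (s+1) (k+1) = (s :: ascS (s+1) k) ++ [s+k+1]
    rw [ih (s+1)]
    simp [Nat.add_assoc, Nat.add_comm 1 k]

lemma reverse_runS (s k : ℕ) : (runS s k).reverse = ascS s k := by
  induction k generalizing s with
  | zero => simp [runS, ascS]
  | succ k ih =>
    rw [runS_succ', ascS]
    simp [ih (s+1)]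

lemma reverse_ascS (s k : ℕ) : (ascS s k).reverse = runS s k := by
  rw [← reverse_runS]; simp

/-- shift invariance of braid equivalence -/
lemma beq.shift {u v : List ℕ} (t : ℕ) (h : beq u v) :
    beq (u.map (· + t)) (v.map (· + t)) := by
  induction h with
  | refl => exact .rfl
  | tail _ h2 ih =>
    refine ih.trans ?_
    obtain ⟨p, a, b, q, hr, rfl, rfl⟩ := h2
    refine bstep.beq ⟨p.map (· + t), a.map (· + t), b.map (· + t), q.map (· + t), ?_, by simp,
      by simp⟩
    obtain ⟨i, j, ⟨hf, rfl, rfl⟩|⟨hn, rfl, rfl⟩⟩ := hr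
    · exact ⟨i + t, j + t, .inl ⟨by rcases hf with h|h <;> [left; right] <;> omega, by simp,
        by simp⟩⟩
    · exact ⟨i + t, j + t, .inr ⟨by rcases hn with h|h <;> [left; right] <;> omega, by simp,
        by simp⟩⟩

lemma map_shift_runS (s k : ℕ) : (runS s k).map (· + 1) = runS (s+1) k := by
  induction k with
  | zero => simp [runS]
  | succ k ih => simp [runS, ih]; omega

lemma map_shift_ascS (s k : ℕ) : (ascS s k).map (· + 1) = ascS (s+1) k := by
  induction k generalizing s with
  | zero => simp [ascS]
  | succ k ih => simp [ascS, ih]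

/-- L1 : `run · σ_{b+1} ≡ σ_b · run` -/
lemma beq.runS_mul : ∀ {k s b : ℕ}, s ≤ b → b + 1 < s + k →
    beq (runS s k ++ [b+1]) (b :: runS s k) := by
  intro k
  induction k with
  | zero => intro s b _ h; omega
  | succ k ih =>
    intro s b hb hbk
    rcases Nat.lt_or_ge (b+1) (s+k) with hlt|hge
    · have h1 : beq ((s+k) :: (runS s k ++ [b+1])) ((s+k) :: (b :: runS s k)) :=
        (ih hb hlt).cons _
      refine (beq.trans (by simpa [runS] using h1 : beq (runS s (k+1) ++ [b+1]) _) ?_)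
      exact beq.swap (by right; omega) _
    · have hbk' : b + 1 = s + k := by omega
      obtain ⟨k, rfl⟩ : ∃ k', k = k' + 1 := ⟨k - 1, by omega⟩
      have hrw : runS s (k+2) ++ [b+1] = (b+1) :: b :: (runS s k ++ [b+1]) := by
        have h1 : runS s (k+2) = (s+(k+1)) :: (s+k) :: runS s k := Eq.refl _
        rw [h1]
        have e1 : s+(k+1) = b+1 := by omega
        have e2 : s+k = b := by omega
        rw [e1, e2]; simp
      rw [hrw]
      have hmove : beq (runS s k ++ [b+1]) ((b+1) :: runS s k) := by
        have h := beq.far_all (c := b+1) (l := runS s k)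
          (fun x hx => by have hh := mem_runS hx; right; omega) []
        simpa using h.symm
      refine ((hmove.cons b).cons (b+1)).trans ?_
      refine (beq.braid (by right; rfl) _).trans ?_
      have hfin : b :: (b+1) :: b :: runS s k = b :: runS s (k+2) := by
        have h1 : runS s (k+2) = (s+(k+1)) :: (s+k) :: runS s k := Eq.refl _
        rw [h1]
        have e1 : s+(k+1) = b+1 := by omega
        have e2 : s+k = b := by omega
        rw [e1, e2]
      rw [← hfin]
      exact .rfl

/-- L9a : `asc · σ_b ≡ σ_{b+1} · asc` -/
lemma beq.ascS_mul : ∀ {k s b : ℕ}, s ≤ b → b + 1 < s + k →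
    beq (ascS s k ++ [b]) ((b+1) :: ascS s k) := by
  intro k
  induction k with
  | zero => intro s b _ h; omega
  | succ k ih =>
    intro s b hb hbk
    rcases Nat.lt_or_ge s b with hlt|hge
    · have h1 : beq (s :: (ascS (s+1) k ++ [b])) (s :: ((b+1) :: ascS (s+1) k)) :=
        (ih (by omega) (by omega)).cons _
      refine (beq.trans (by simpa [ascS] using h1 : beq (ascS s (k+1) ++ [b]) _) ?_)
      exact beq.swap (by left; omega) _
    · have hbs : b = s := by omega
      subst hbs
      obtain ⟨k, rfl⟩ : ∃ k', k = k' + 1 := ⟨k - 1, by omega⟩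
      have hrw : ascS b (k+2) ++ [b] = b :: (b+1) :: (ascS (b+2) k ++ [b]) := by
        show (b :: (b+1) :: ascS (b+2) k) ++ [b] = _
        simp
      rw [hrw]
      have hmove : beq (ascS (b+2) k ++ [b]) (b :: ascS (b+2) k) := by
        have := (beq.far_all (c := b) (l := ascS (b+2) k)
          (fun x hx => by have := mem_ascS hx; left; omega) []).symm
        simpa using this
      refine ((hmove.cons (b+1)).cons b).trans ?_
      refine (beq.braid (by left; rfl) _).trans ?_
      exact .rfl

/-- L9 : the ascending run conjugates by the shift -/
lemma beq.ascS_conj {m : ℕ} {w : List ℕ} (hw : ∀ x ∈ w, x < m) :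
    beq (ascS 0 (m+1) ++ w) (w.map (· + 1) ++ ascS 0 (m+1)) := by
  induction w with
  | nil =>
    simp only [List.append_nil, List.map_nil, List.nil_append]
    exact .rfl
  | cons x w ih =>
    have h1 : ascS 0 (m+1) ++ x :: w = (ascS 0 (m+1) ++ [x]) ++ w := by simp
    rw [h1]
    refine ((beq.ascS_mul (Nat.zero_le x) (by have := hw x (by simp); omega)).append_right
      w).trans ?_
    have h2 := (ih (fun y hy => hw y (by simp [hy]))).cons (x+1)
    simpa using h2

/-- L7 : cycling identity -/
lemma beq.cycle (m : ℕ) :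
    beq (ascS 0 m ++ runS 0 (m+1)) (runS 1 m ++ ascS 0 (m+1)) := by
  induction m with
  | zero => exact .rfl
  | succ m ih =>
    -- LHS = asc m ++ [m] ++ (m+1) :: m :: run m
    have e1 : ascS 0 (m+1) ++ runS 0 (m+2) =
        (ascS 0 m ++ [m, m+1, m]) ++ runS 0 m := by
      rw [ascS_succ']
      have h2 : runS 0 (m+2) = (m+1) :: m :: runS 0 m := by
        show (0 + (m+1)) :: (0 + m) :: runS 0 m = _
        simp
      rw [h2]; simp
    rw [e1]
    have braidmove : beq (ascS 0 m ++ [m, m+1, m] ++ runS 0 m)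
        (ascS 0 m ++ [m+1, m, m+1] ++ runS 0 m) := by
      refine beq.append_right ?_ _
      exact (beq.braid (i := m) (j := m+1) (.inl (Eq.refl _)) []).append_left (ascS 0 m)
    refine braidmove.trans ?_
    -- pull first m+1 to the front
    have pull : beq (ascS 0 m ++ [m+1, m, m+1] ++ runS 0 m)
        ((m+1) :: (ascS 0 m ++ [m] ++ ([m+1] ++ runS 0 m))) := by
      have := (beq.far_all (c := m+1) (l := ascS 0 m)
        (fun x hx => by have := mem_ascS hx; right; omega) ([m, m+1] ++ runS 0 m)).symm
      refine beq.trans (by simpa using beq.rfl) (by simpa using this)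
    refine pull.trans ?_
    -- push inner m+1 to the back
    have push : beq ([m+1] ++ runS 0 m) (runS 0 m ++ [m+1]) := by
      have := beq.far_all (c := m+1) (l := runS 0 m)
        (fun x hx => by have := mem_runS hx; right; omega) []
      simpa using this
    have step2 : beq ((m+1) :: (ascS 0 m ++ [m] ++ ([m+1] ++ runS 0 m)))
        ((m+1) :: (ascS 0 m ++ [m] ++ (runS 0 m ++ [m+1]))) :=
      ((push.append_left (ascS 0 m ++ [m])).cons (m+1))
    refine step2.trans ?_
    -- inner part is LHS of IH : asc m ++ (m :: run m) = asc m ++ run (m+1)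
    have e2 : ascS 0 m ++ [m] ++ (runS 0 m ++ [m+1]) =
        (ascS 0 m ++ runS 0 (m+1)) ++ [m+1] := by
      have h2 : runS 0 (m+1) = m :: runS 0 m := by
        show (0+m) :: runS 0 m = _
        congr 1; omega
      rw [h2]; simp
    rw [e2]
    have step3 : beq ((m+1) :: ((ascS 0 m ++ runS 0 (m+1)) ++ [m+1]))
        ((m+1) :: ((runS 1 m ++ ascS 0 (m+1)) ++ [m+1])) := (ih.append_right _).cons _
    refine step3.trans ?_
    have e3 : (m+1) :: ((runS 1 m ++ ascS 0 (m+1)) ++ [m+1]) =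
        runS 1 (m+1) ++ (ascS 0 (m+1) ++ [0 + (m+1)]) := by
      show _ = ((1+m) :: runS 1 m) ++ _
      have h : 1 + m = m + 1 := by omega
      rw [h]; simp
    rw [e3, ← ascS_succ']
    exact .rfl

/-- L4' : `Δ_{m+1} ≡ shift(Δ_m) · asc_{m+1}` -/
lemma beq.delta_asc : ∀ m : ℕ, beq (delta (m+1)) ((delta m).map (· + 1) ++ ascS 0 (m+1))
  | 0 => .rfl
  | (m+1) => by
    have ih := beq.delta_asc m
    show beq (delta (m+1) ++ runS 0 (m+2)) _
    refine ((ih.append_right (runS 0 (m+2))).trans ?_)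
    have h1 : (delta m).map (· + 1) ++ ascS 0 (m+1) ++ runS 0 (m+2) =
        (delta m).map (· + 1) ++ (ascS 0 (m+1) ++ runS 0 (m+2)) := by simp
    rw [h1]
    refine ((beq.cycle (m+1)).append_left _).trans ?_
    have h2 : (delta (m+1)).map (· + 1) = (delta m).map (· + 1) ++ runS 1 (m+1) := by
      show (delta m ++ runS 0 (m+1)).map (· + 1) = _
      rw [List.map_append, map_shift_runS]
    rw [h2]
    simp only [List.append_assoc]
    exact .rfl

/-- L8 : Δ is reversible -/
lemma beq.delta_reverse : ∀ m : ℕ, beq (delta m).reverse (delta m)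
  | 0 => .rfl
  | (m+1) => by
    have ih := beq.delta_reverse m
    have h1 : (delta (m+1)).reverse = ascS 0 (m+1) ++ (delta m).reverse := by
      show (delta m ++ runS 0 (m+1)).reverse = _
      rw [List.reverse_append, reverse_runS]
    rw [h1]
    refine ((ih.append_left _).trans ?_)
    refine (beq.ascS_conj (fun x hx => mem_delta hx)).trans ?_
    exact (beq.delta_asc m).symm

/-- L4 : `Δ_{m+1} ≡ run_{m+1} · shift(Δ_m)` -/
lemma beq.delta_run (m : ℕ) : beq (delta (m+1)) (runS 0 (m+1) ++ (delta m).map (· + 1)) := by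
  refine (beq.delta_reverse (m+1)).symm.trans ?_
  have h1 := (beq.delta_asc m).reverse
  simp only [List.reverse_append, reverse_ascS] at h1
  refine h1.trans ?_
  refine beq.append_left ?_ _
  have h2 : ((delta m).map (· + 1)).reverse = ((delta m).reverse).map (· + 1) := by
    simp
  rw [h2]
  exact ((beq.delta_reverse m).shift 1)

/-- D1 : every generator divides Δ -/
lemma beq.delta_div : ∀ m i : ℕ, i < m → ∃ c, beq (delta m) (i :: c) := by
  intro m
  induction m with
  | zero => omega
  | succ m ih =>
    intro i hi
    rcases Nat.lt_or_ge i m with hlt|hge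
    · obtain ⟨c, hc⟩ := ih i hlt
      exact ⟨c ++ runS 0 (m+1), by
        show beq (delta m ++ runS 0 (m+1)) _; simpa using hc.append_right (runS 0 (m+1))⟩
    · have hi' : i = m := by omega
      rw [hi']
      refine ⟨runS 0 m ++ (delta m).map (· + 1), ?_⟩
      refine (beq.delta_run m).trans ?_
      have h : runS 0 (m+1) = m :: runS 0 m := by
        show (0+m) :: _ = _
        simp
      rw [h]
      simp only [List.cons_append]
      exact .rfl

/-- D2 : `Δ σ_i ≡ σ_{m-1-i} Δ` -/
lemma beq.delta_conj : ∀ m i : ℕ, i < m → beq (delta m ++ [i]) ((m-1-i) :: delta m) := by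
  intro m
  induction m with
  | zero => omega
  | succ m ih =>
    intro i hi
    rcases Nat.eq_zero_or_pos i with rfl|hpos
    · rcases Nat.eq_zero_or_pos m with rfl|hm
      · exact .rfl
      · -- i = 0, m ≥ 1
        refine ((beq.delta_asc m).append_right [0]).trans ?_
        have h1 : (delta m).map (· + 1) ++ ascS 0 (m+1) ++ [0] =
            (delta m).map (· + 1) ++ (ascS 0 (m+1) ++ [0]) := by simp
        rw [h1]
        refine ((beq.ascS_mul (Nat.zero_le 0) (by omega)).append_left _).trans ?_
        have h2 : beq ((delta m).map (· + 1) ++ ((0+1) :: ascS 0 (m+1)))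
            (m :: ((delta m).map (· + 1) ++ ascS 0 (m+1))) := by
          have h := ((ih 0 hm).shift 1).append_right (ascS 0 (m+1))
          have e : m - 1 - 0 = m - 1 := by omega
          rw [e] at h
          simp only [List.map_append, List.map_cons, List.map_nil, List.append_assoc,
            List.cons_append, List.nil_append] at h ⊢
          have e2 : m - 1 + 1 = m := by omega
          rw [e2] at h
          exact h
        refine h2.trans ?_
        have h5 : (m + 1 - 1 - 0 : ℕ) = m := by omega
        rw [h5]
        exact ((beq.delta_asc m).symm).cons m
    · -- i ≥ 1
      obtain ⟨b, rfl⟩ : ∃ b, i = b + 1 := ⟨i - 1, by omega⟩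
      show beq (delta m ++ runS 0 (m+1) ++ [b+1]) _
      have h1 : delta m ++ runS 0 (m+1) ++ [b+1] = delta m ++ (runS 0 (m+1) ++ [b+1]) := by simp
      rw [h1]
      refine ((beq.runS_mul (Nat.zero_le b) (by omega)).append_left _).trans ?_
      have h2 : delta m ++ (b :: runS 0 (m+1)) = (delta m ++ [b]) ++ runS 0 (m+1) := by simp
      rw [h2]
      refine ((ih b (by omega)).append_right _).trans ?_
      have h3 : (m - 1 - b) :: delta m ++ runS 0 (m+1) = (m - 1 - b) :: delta (m+1) := by
        show _ = (m-1-b) :: (delta m ++ runS 0 (m+1))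
        simp
      rw [h3]
      have h : m - 1 - b = m + 1 - 1 - (b+1) := by omega
      rw [← h]
      exact .rfl



/-- Δ-conjugation for words -/
lemma beq.delta_conj_word (m : ℕ) : ∀ w : List ℕ, (∀ x ∈ w, x < m) →
    beq (delta m ++ w) (w.map (m - 1 - ·) ++ delta m)
  | [], _ => by
    simp only [List.append_nil, List.map_nil, List.nil_append]
    exact .rfl
  | (x :: w), h => by
    have h1 : delta m ++ (x :: w) = (delta m ++ [x]) ++ w := by simp
    rw [h1]
    refine ((beq.delta_conj m x (h x (by simp))).append_right w).trans ?_
    exact ((beq.delta_conj_word m w (fun y hy => h y (by simp [hy]))).cons _)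

lemma map_flip_flip (m : ℕ) : ∀ (w : List ℕ), (∀ x ∈ w, x < m) →
    (w.map (m - 1 - ·)).map (m - 1 - ·) = w
  | [], _ => by simp
  | (a :: w), hw => by
    simp only [List.map_cons, List.cons.injEq]
    refine ⟨by have := hw a (by simp); omega, map_flip_flip m w (fun y hy => hw y (by simp [hy]))⟩

lemma beq.word_delta (m : ℕ) (w : List ℕ) (hw : ∀ x ∈ w, x < m) :
    beq (w ++ delta m) (delta m ++ w.map (m - 1 - ·)) := by
  have hb : ∀ x ∈ w.map (m - 1 - ·), x < m := by
    intro x hx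
    simp only [List.mem_map] at hx
    obtain ⟨y, hy, rfl⟩ := hx
    have := hw y hy; omega
  have h := beq.delta_conj_word m (w.map (m - 1 - ·)) hb
  rw [map_flip_flip m w hw] at h
  exact h.symm

/-- powers of Δ -/
def dpow (m : ℕ) : ℕ → List ℕ
  | 0 => []
  | k+1 => delta m ++ dpow m k

lemma mem_dpow {m k x : ℕ} (h : x ∈ dpow m k) : x < m := by
  induction k with
  | zero => simp [dpow] at h
  | succ k ih =>
    rcases (by simpa [dpow] using h : x ∈ delta m ∨ x ∈ dpow m k) with h|h
    exacts [mem_delta h, ih h]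

lemma dpow_add (m a b : ℕ) : dpow m (a + b) = dpow m a ++ dpow m b := by
  induction a with
  | zero => simp [dpow]
  | succ a ih =>
    have e : a + 1 + b = (a + b) + 1 := by omega
    rw [e]
    show delta m ++ dpow m (a + b) = dpow m (a+1) ++ dpow m b
    rw [ih]
    show _ = (delta m ++ dpow m a) ++ dpow m b
    rw [List.append_assoc]

lemma beq.word_dpow (m k : ℕ) : ∀ (w : List ℕ), (∀ x ∈ w, x < m) →
    ∃ w', (∀ x ∈ w', x < m) ∧ beq (w ++ dpow m k) (dpow m k ++ w') := by
  induction k with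
  | zero => exact fun w hw => ⟨w, hw, by simpa [dpow] using beq.rfl⟩
  | succ k ih =>
    intro w hw
    have hb : ∀ x ∈ w.map (m - 1 - ·), x < m := by
      intro x hx
      simp only [List.mem_map] at hx
      obtain ⟨y, hy, rfl⟩ := hx
      have := hw y hy; omega
    obtain ⟨w', hw', hmove⟩ := ih (w.map (m - 1 - ·)) hb
    refine ⟨w', hw', ?_⟩
    show beq (w ++ (delta m ++ dpow m k)) (delta m ++ dpow m k ++ w')
    have h1 : w ++ (delta m ++ dpow m k) = (w ++ delta m) ++ dpow m k := by simp
    rw [h1]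
    refine ((beq.word_delta m w hw).append_right (dpow m k)).trans ?_
    have h2 : delta m ++ w.map (m - 1 - ·) ++ dpow m k =
        delta m ++ (w.map (m - 1 - ·) ++ dpow m k) := by simp
    rw [h2]
    refine (hmove.append_left (delta m)).trans ?_
    simp only [List.append_assoc]
    exact .rfl

/-- every bounded word left-divides a power of Δ -/
lemma beq.div_dpow (m : ℕ) : ∀ u : List ℕ, (∀ x ∈ u, x < m) →
    ∃ c, beq (dpow m u.length) (u ++ c) := by
  intro u
  induction u with
  | nil => exact fun _ => ⟨[], .rfl⟩
  | cons i y ih =>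
    intro hu
    obtain ⟨ci, hci⟩ := beq.delta_div m i (hu i (by simp))
    obtain ⟨cy, hcy⟩ := ih (fun x hx => hu x (by simp [hx]))
    have hball : ∀ x ∈ ci, x < m := fun x hx => mem_delta (hci.mem (by simp [hx]))
    obtain ⟨ci', _, hmove⟩ := beq.word_dpow m y.length ci hball
    refine ⟨cy ++ ci', ?_⟩
    show beq (delta m ++ dpow m y.length) _
    refine ((hci.append_right (dpow m y.length)).trans ?_)
    show beq (i :: (ci ++ dpow m y.length)) _
    refine (hmove.cons i).trans ?_
    have h3 := ((hcy.append_right ci').cons i)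
    refine h3.trans ?_
    simp only [List.append_assoc, List.cons_append]
    exact .rfl

lemma beq.common_right (m : ℕ) (u v : List ℕ) (hu : ∀ x ∈ u, x < m) (hv : ∀ x ∈ v, x < m) :
    ∃ a b, (∀ x ∈ a, x < m) ∧ (∀ x ∈ b, x < m) ∧ beq (u ++ a) (v ++ b) := by
  obtain ⟨c, hc⟩ := beq.div_dpow m u hu
  obtain ⟨d, hd⟩ := beq.div_dpow m v hv
  have hcb : ∀ x ∈ c, x < m := fun x hx => mem_dpow (hc.mem (by simp [hx]))
  have hdb : ∀ x ∈ d, x < m := fun x hx => mem_dpow (hd.mem (by simp [hx]))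
  refine ⟨c ++ dpow m v.length, d ++ dpow m u.length, ?_, ?_, ?_⟩
  · intro x hx
    rcases (by simpa using hx : x ∈ c ∨ x ∈ dpow m v.length) with h|h
    exacts [hcb x h, mem_dpow h]
  · intro x hx
    rcases (by simpa using hx : x ∈ d ∨ x ∈ dpow m u.length) with h|h
    exacts [hdb x h, mem_dpow h]
  · have h1 : beq (dpow m (u.length + v.length)) (u ++ (c ++ dpow m v.length)) := by
      rw [dpow_add]
      have := hc.append_right (dpow m v.length)
      simpa [List.append_assoc] using this
    have h2 : beq (dpow m (u.length + v.length)) (v ++ (d ++ dpow m u.length)) := by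
      rw [Nat.add_comm, dpow_add]
      have := hd.append_right (dpow m u.length)
      simpa [List.append_assoc] using this
    exact h1.symm.trans h2

lemma beq.common_left (m : ℕ) (u v : List ℕ) (hu : ∀ x ∈ u, x < m) (hv : ∀ x ∈ v, x < m) :
    ∃ a b, (∀ x ∈ a, x < m) ∧ (∀ x ∈ b, x < m) ∧ beq (a ++ u) (b ++ v) := by
  obtain ⟨a, b, ha, hb, h⟩ := beq.common_right m u.reverse v.reverse
    (fun x hx => hu x (by simpa using hx)) (fun x hx => hv x (by simpa using hx))
  refine ⟨a.reverse, b.reverse, fun x hx => ha x (by simpa using hx),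
    fun x hx => hb x (by simpa using hx), ?_⟩
  have h2 := h.reverse
  simpa using h2



variable {m : ℕ}

/-- the word in `ℕ` underlying an element of the free monoid over `Fin m` -/
def wv (x : FreeMonoid (Fin m)) : List ℕ := (FreeMonoid.toList x).map Fin.val

lemma wv_mul (x y : FreeMonoid (Fin m)) : wv (x * y) = wv x ++ wv y := by
  simp [wv, FreeMonoid.toList_mul]

lemma wv_of (i : Fin m) : wv (FreeMonoid.of i) = [(i : ℕ)] := rfl

lemma wv_bound (x : FreeMonoid (Fin m)) : ∀ a ∈ wv x, a < m := by
  intro a ha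
  simp only [wv, List.mem_map] at ha
  obtain ⟨y, _, rfl⟩ := ha
  exact y.isLt

/-- lifting a bounded word to the free monoid over `Fin m` -/
def lw (u : List ℕ) (hu : ∀ x ∈ u, x < m) : FreeMonoid (Fin m) :=
  FreeMonoid.ofList (u.pmap (fun x hx => (⟨x, hx⟩ : Fin m)) hu)

lemma wv_lw (u : List ℕ) (hu : ∀ x ∈ u, x < m) : wv (lw u hu) = u := by
  simp [wv, lw, FreeMonoid.toList_ofList, List.map_pmap, List.pmap_eq_map]

lemma pmap_map_val (l : List (Fin m)) (h : ∀ x ∈ l.map Fin.val, x < m) :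
    (l.map Fin.val).pmap (fun x hx => (⟨x, hx⟩ : Fin m)) h = l := by
  induction l with
  | nil => simp
  | cons a l ih => simp [ih]

lemma lw_wv (x : FreeMonoid (Fin m)) : lw (wv x) (wv_bound x) = x := by
  show FreeMonoid.ofList (List.pmap (fun x hx => (⟨x, hx⟩ : Fin m))
    ((FreeMonoid.toList x).map Fin.val) _) = x
  refine (congrArg FreeMonoid.ofList (pmap_map_val _ _)).trans ?_
  exact FreeMonoid.ofList_toList x

lemma conGen_to_beq {x y : FreeMonoid (Fin m)} (h : conGen (braidMonoidRels m) x y) :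
    beq (wv x) (wv y) := by
  induction h with
  | of a b hab =>
    obtain ⟨i, j, ⟨hij, rfl, rfl⟩|⟨hij, rfl, rfl⟩⟩ := hab
    · have hf : far (i : ℕ) (j : ℕ) := .inl hij
      simpa [wv_mul, wv_of] using beq.swap hf []
    · have hn : near (i : ℕ) (j : ℕ) := .inl hij.symm
      simpa [wv_mul, wv_of] using beq.braid hn []
  | refl => exact .rfl
  | symm _ ih => exact ih.symm
  | trans _ _ ih1 ih2 => exact ih1.trans ih2
  | mul _ _ ih1 ih2 => rw [wv_mul, wv_mul]; exact ih1.append ih2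

lemma lw_cons2 (i j : ℕ) (hij : ∀ x ∈ [i, j], x < m) :
    lw [i, j] hij = FreeMonoid.of (⟨i, hij i (by simp)⟩ : Fin m) *
      FreeMonoid.of (⟨j, hij j (by simp)⟩ : Fin m) := rfl

lemma lw_cons3 (i j k : ℕ) (hijk : ∀ x ∈ [i, j, k], x < m) :
    lw [i, j, k] hijk = FreeMonoid.of (⟨i, hijk i (by simp)⟩ : Fin m) *
      FreeMonoid.of (⟨j, hijk j (by simp)⟩ : Fin m) *
      FreeMonoid.of (⟨k, hijk k (by simp)⟩ : Fin m) := rfl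

lemma bstep_lift {u v : List ℕ} (h : bstep u v) (hu : ∀ x ∈ u, x < m)
    (hv : ∀ x ∈ v, x < m) : conGen (braidMonoidRels m) (lw u hu) (lw v hv) := by
  obtain ⟨p, a, b, q, hr, rfl, rfl⟩ := h
  have hp : ∀ x ∈ p, x < m := fun x hx => hu x (by simp [hx])
  have ha : ∀ x ∈ a, x < m := fun x hx => hu x (by simp [hx])
  have hq : ∀ x ∈ q, x < m := fun x hx => hu x (by simp [hx])
  have hb : ∀ x ∈ b, x < m := fun x hx => hv x (by simp [hx])
  have hsplitu : lw (p ++ a ++ q) hu = lw p hp * lw a ha * lw q hq := by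
    show FreeMonoid.ofList _ = _
    rw [List.pmap_append, List.pmap_append, FreeMonoid.ofList_append,
      FreeMonoid.ofList_append]
    rfl
  have hsplitv : lw (p ++ b ++ q) hv = lw p hp * lw b hb * lw q hq := by
    show FreeMonoid.ofList _ = _
    rw [List.pmap_append, List.pmap_append, FreeMonoid.ofList_append,
      FreeMonoid.ofList_append]
    rfl
  rw [hsplitu, hsplitv]
  have hrel : conGen (braidMonoidRels m) (lw a ha) (lw b hb) := by
    obtain ⟨i, j, ⟨hij, rfl, rfl⟩|⟨hij, rfl, rfl⟩⟩ := hr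
    · rw [lw_cons2 i j ha, lw_cons2 j i hb]
      set fi : Fin m := ⟨i, ha i (by simp)⟩
      set fj : Fin m := ⟨j, ha j (by simp)⟩
      rcases hij with hij|hij
      · exact ConGen.Rel.of _ _ ⟨fi, fj, .inl ⟨hij, rfl, rfl⟩⟩
      · exact ConGen.Rel.symm (ConGen.Rel.of _ _ ⟨fj, fi, .inl ⟨hij, rfl, rfl⟩⟩)
    · rw [lw_cons3 i j i ha, lw_cons3 j i j hb]
      set fi : Fin m := ⟨i, ha i (by simp)⟩
      set fj : Fin m := ⟨j, ha j (by simp)⟩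
      rcases hij with hij|hij
      · exact ConGen.Rel.of _ _ ⟨fi, fj, .inr ⟨hij.symm, rfl, rfl⟩⟩
      · exact ConGen.Rel.symm (ConGen.Rel.of _ _ ⟨fj, fi, .inr ⟨hij.symm, rfl, rfl⟩⟩)
  exact ConGen.Rel.mul (ConGen.Rel.mul (ConGen.Rel.refl _) hrel) (ConGen.Rel.refl _)

lemma beq_lift {u v : List ℕ} (h : beq u v) :
    ∀ (hu : ∀ x ∈ u, x < m) (hv : ∀ x ∈ v, x < m),
    conGen (braidMonoidRels m) (lw u hu) (lw v hv) := by
  induction h with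
  | refl => intro hu hv; exact ConGen.Rel.refl _
  | tail h1 h2 ih =>
    intro hu hv
    rename_i b c
    have hmid : ∀ x ∈ b, x < m := fun x hx => hu x (beq.mem h1 hx)
    exact ConGen.Rel.trans (ih hu hmid) (bstep_lift h2 hmid hv)

lemma mk_eq_iff_beq {x y : FreeMonoid (Fin m)} :
    PresentedMonoid.mk (braidMonoidRels m) x = PresentedMonoid.mk _ y ↔
      beq (wv x) (wv y) := by
  constructor
  · intro h
    exact conGen_to_beq (Quotient.exact h)
  · intro h
    have h2 := beq_lift h (wv_bound x) (wv_bound y)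
    rw [lw_wv, lw_wv] at h2
    exact Quotient.sound h2

lemma braid_mul_left_cancel {a x y : PresentedMonoid (braidMonoidRels m)}
    (h : a * x = a * y) : x = y := by
  obtain ⟨u, rfl⟩ := PresentedMonoid.surjective_mk a
  obtain ⟨p, rfl⟩ := PresentedMonoid.surjective_mk x
  obtain ⟨q, rfl⟩ := PresentedMonoid.surjective_mk y
  rw [← map_mul, ← map_mul] at h
  have hb := mk_eq_iff_beq.mp h
  rw [wv_mul, wv_mul] at hb
  exact mk_eq_iff_beq.mpr (beq.cancel_left hb)

lemma braid_mul_right_cancel {a x y : PresentedMonoid (braidMonoidRels m)}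
    (h : x * a = y * a) : x = y := by
  obtain ⟨u, rfl⟩ := PresentedMonoid.surjective_mk a
  obtain ⟨p, rfl⟩ := PresentedMonoid.surjective_mk x
  obtain ⟨q, rfl⟩ := PresentedMonoid.surjective_mk y
  rw [← map_mul, ← map_mul] at h
  have hb := mk_eq_iff_beq.mp h
  rw [wv_mul, wv_mul] at hb
  exact mk_eq_iff_beq.mpr (beq.cancel_right hb)

lemma braid_common_left (x y : PresentedMonoid (braidMonoidRels m)) :
    ∃ a b, a * x = b * y := by
  obtain ⟨u, rfl⟩ := PresentedMonoid.surjective_mk x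
  obtain ⟨v, rfl⟩ := PresentedMonoid.surjective_mk y
  obtain ⟨a, b, hab, hbb, h⟩ := beq.common_left m (wv u) (wv v) (wv_bound u) (wv_bound v)
  refine ⟨PresentedMonoid.mk _ (lw a hab), PresentedMonoid.mk _ (lw b hbb), ?_⟩
  rw [← map_mul, ← map_mul]
  apply mk_eq_iff_beq.mpr
  rw [wv_mul, wv_mul, wv_lw, wv_lw]
  exact h


end Braid
namespace Braid

noncomputable instance braidOreSet (m : ℕ) :
    OreLocalization.OreSet (⊤ : Submonoid (PresentedMonoid (braidMonoidRels m))) where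
  ore_right_cancel r₁ r₂ s h := ⟨1, by
    simp only [OneMemClass.coe_one, one_mul]
    exact braid_mul_right_cancel h⟩
  oreNum r s := (braid_common_left r (s : PresentedMonoid (braidMonoidRels m))).choose_spec.choose
  oreDenom r s :=
    ⟨(braid_common_left r (s : PresentedMonoid (braidMonoidRels m))).choose, trivial⟩
  ore_eq r s :=
    (braid_common_left r (s : PresentedMonoid (braidMonoidRels m))).choose_spec.choose_spec

abbrev BQ (m : ℕ) :=
  OreLocalization (⊤ : Submonoid (PresentedMonoid (braidMonoidRels m)))
    (PresentedMonoid (braidMonoidRels m))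

noncomputable def numHom (m : ℕ) : PresentedMonoid (braidMonoidRels m) →* BQ m :=
  OreLocalization.numeratorHom

lemma numHom_inj (m : ℕ) : Function.Injective (numHom m) := by
  intro x y h
  rw [numHom, OreLocalization.numeratorHom_apply, OreLocalization.numeratorHom_apply,
    OreLocalization.oreDiv_eq_iff] at h
  obtain ⟨u, v, h1, h2⟩ := h
  have h2' : (u : PresentedMonoid (braidMonoidRels m)) = v := by simpa using h2
  have h1' : (u : PresentedMonoid (braidMonoidRels m)) * y =
      v * x := h1
  rw [← h2'] at h1'
  exact (braid_mul_left_cancel h1').symm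

noncomputable def iotaU (m : ℕ) : PresentedMonoid (braidMonoidRels m) →* (BQ m)ˣ where
  toFun r := (OreLocalization.numerator_isUnit
    (⟨r, trivial⟩ : (⊤ : Submonoid (PresentedMonoid (braidMonoidRels m))))).unit
  map_one' := Units.ext (by simp [IsUnit.unit_spec, OreLocalization.one_def])
  map_mul' a b := Units.ext (by simp [IsUnit.unit_spec])

lemma iotaU_val (m : ℕ) (r : PresentedMonoid (braidMonoidRels m)) :
    ((iotaU m r : (BQ m)ˣ) : BQ m) = numHom m r := IsUnit.unit_spec _

lemma iotaU_inj (m : ℕ) : Function.Injective (iotaU m) := fun x y h =>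
  numHom_inj m (by rw [← iotaU_val, ← iotaU_val, h])

lemma braid_rel_in_monoid {m : ℕ} {a b : FreeMonoid (Fin m)} (h : braidMonoidRels m a b) :
    PresentedMonoid.mk (braidMonoidRels m) a = PresentedMonoid.mk (braidMonoidRels m) b :=
  Quotient.sound (ConGen.Rel.of _ _ h)

end Braid

/-- (Garside) The canonical monoid homomorphism from the braid monoid `B_n⁺` to the braid
group `B_n`, sending each monoid generator `σᵢ` to the group generator `σᵢ`, is injective. -/
theorem braidMonoid_toGroup_injective (n : ℕ) (hn : 2 ≤ n)
    (φ : BraidMonoid n →* BraidGroup n)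
    (hφ : ∀ i : Fin (n - 1), φ (braidMonGen n i) = braidGen n i) :
    Function.Injective φ := by
  classical
  set m := n - 1 with hm
  let ι := Braid.iotaU m
  let f : Fin m → (Braid.BQ m)ˣ := fun i => ι (PresentedMonoid.of (braidMonoidRels m) i)
  have hcomm : ∀ (a b : FreeMonoid (Fin m)), braidMonoidRels m a b →
      (PresentedMonoid.mk (braidMonoidRels m)) a = (PresentedMonoid.mk (braidMonoidRels m)) b :=
    fun a b h => Braid.braid_rel_in_monoid h
  have hrels : ∀ r ∈ braidRels m, FreeGroup.lift f r = 1 := by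
    rintro r ⟨i, j, ⟨hij, rfl⟩|⟨hij, rfl⟩⟩
    · have hrel : (PresentedMonoid.of (braidMonoidRels m) i) * .of _ j =
          (PresentedMonoid.of (braidMonoidRels m) j) * .of _ i := by
        apply hcomm
        exact ⟨i, j, .inl ⟨hij, rfl, rfl⟩⟩
      have hc : f i * f j = f j * f i := by
        simp only [f, ← map_mul]
        rw [hrel]
      simp only [map_mul, map_inv, FreeGroup.lift_apply_of]
      rw [hc]
      group
    · have hrel : (PresentedMonoid.of (braidMonoidRels m) i) * .of _ j * .of _ i =
          (PresentedMonoid.of (braidMonoidRels m) j) * .of _ i * .of _ j := by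
        apply hcomm
        exact ⟨i, j, .inr ⟨hij, rfl, rfl⟩⟩
      have hc : f i * f j * f i = f j * f i * f j := by
        simp only [f, ← map_mul]
        rw [hrel]
      simp only [map_mul, map_inv, FreeGroup.lift_apply_of]
      rw [← hc]
      group
  let ψ : BraidGroup n →* (Braid.BQ m)ˣ := PresentedGroup.toGroup hrels
  have hcompHom : ψ.comp φ = ι := by
    apply PresentedMonoid.ext (rels := braidMonoidRels m)
    intro i
    show ψ (φ (braidMonGen n i)) = ι (PresentedMonoid.of (braidMonoidRels m) i)
    rw [hφ i]
    exact PresentedGroup.toGroup.of hrels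
  intro x y h
  have h2 : ι x = ι y := by
    rw [← hcompHom]
    exact congrArg ψ h
  exact Braid.iotaU_inj m h2
end

section
/- Let n ≥ 2 and work in the braid monoid B_n^+ (the monoid presented by generators σ_1, …, σ_{n−1} and the braid relations). Let i, j be indices with |i − j| = 1, let k ≥ 1 be an integer, and let w ∈ B_n^+. If σ_j left-divides σ_i^k · σ_j · w (i.e., σ_i^k · σ_j · w = σ_j · w′ for some w′ ∈ B_n^+), then σ_i left-divides w (i.e., w = σ_i · w″ for some w″ ∈ B_n^+). -/
namespace BraidAux

variable {m : ℕ}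

/-- adjacency of generator indices -/
def Adj (a b : Fin m) : Prop := (a : ℕ) + 1 = b ∨ (b : ℕ) + 1 = a

/-- far-apart (commuting) generator indices -/
def Com (a b : Fin m) : Prop := (a : ℕ) + 2 ≤ b ∨ (b : ℕ) + 2 ≤ a

lemma Adj.symm' {a b : Fin m} (h : Adj a b) : Adj b a := h.symm
lemma Com.symm' {a b : Fin m} (h : Com a b) : Com b a := h.symm

lemma Adj.ne {a b : Fin m} (h : Adj a b) : a ≠ b := by
  rintro rfl; unfold Adj at h; omega

lemma Com.ne {a b : Fin m} (h : Com a b) : a ≠ b := by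
  rintro rfl; unfold Com at h; omega

lemma not_adj_com {a b : Fin m} (h : Adj a b) (h' : Com a b) : False := by
  unfold Adj at h; unfold Com at h'; omega

lemma trich (a b : Fin m) : a = b ∨ Adj a b ∨ Com a b := by
  by_cases h : (a : ℕ) = b
  · exact Or.inl (Fin.ext h)
  · right; unfold Adj Com; omega

lemma adj_adj_adj {a b c : Fin m} (h1 : Adj a c) (h2 : Adj c b) (h3 : Adj a b) : False := by
  have : a ≠ b := h3.ne
  have : (a : ℕ) ≠ b := fun h => this (Fin.ext h)
  unfold Adj at h1 h2 h3; omega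

/-- One-step rewrite using a (symmetrized) braid relation. -/
def Step (x y : List (Fin m)) : Prop :=
  ∃ p s : List (Fin m),
    (∃ a b : Fin m, Com a b ∧ x = p ++ a :: b :: s ∧ y = p ++ b :: a :: s) ∨
    (∃ a b : Fin m, Adj a b ∧ x = p ++ a :: b :: a :: s ∧ y = p ++ b :: a :: b :: s)

/-- Equivalence of positive words. -/
def Rel : List (Fin m) → List (Fin m) → Prop := Relation.ReflTransGen Step

lemma Step.symm'' {x y : List (Fin m)} (h : Step x y) : Step y x := by
  obtain ⟨p, s, ⟨a, b, hab, hx, hy⟩ | ⟨a, b, hab, hx, hy⟩⟩ := h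
  · exact ⟨p, s, Or.inl ⟨b, a, hab.symm', hy, hx⟩⟩
  · exact ⟨p, s, Or.inr ⟨b, a, hab.symm', hy, hx⟩⟩

lemma Rel.refl' (x : List (Fin m)) : Rel x x := Relation.ReflTransGen.refl

lemma Rel.symm {x y : List (Fin m)} (h : Rel x y) : Rel y x :=
  (@Relation.ReflTransGen.stdSymm _ Step ⟨fun _ _ hs => hs.symm''⟩).symm _ _ h

lemma Rel.trans {x y z : List (Fin m)} (h : Rel x y) (h' : Rel y z) : Rel x z :=
  Relation.ReflTransGen.trans h h'

lemma Step.length {x y : List (Fin m)} (h : Step x y) : x.length = y.length := by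
  obtain ⟨p, s, ⟨a, b, hab, hx, hy⟩ | ⟨a, b, hab, hx, hy⟩⟩ := h <;> subst hx <;> subst hy <;> simp

lemma Rel.length {x y : List (Fin m)} (h : Rel x y) : x.length = y.length := by
  induction h with
  | refl => rfl
  | tail _ h ih => exact ih.trans h.length

lemma Step.cons {x y : List (Fin m)} (c : Fin m) (h : Step x y) : Step (c :: x) (c :: y) := by
  obtain ⟨p, s, hh⟩ := h
  refine ⟨c :: p, s, ?_⟩
  rcases hh with ⟨a, b, hab, hx, hy⟩ | ⟨a, b, hab, hx, hy⟩
  · exact Or.inl ⟨a, b, hab, by simp [hx], by simp [hy]⟩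
  · exact Or.inr ⟨a, b, hab, by simp [hx], by simp [hy]⟩

lemma Rel.cons {x y : List (Fin m)} (c : Fin m) (h : Rel x y) : Rel (c :: x) (c :: y) :=
  Relation.ReflTransGen.lift (c :: ·) (fun _ _ hs => hs.cons c) _ _ h

lemma Step.append_right {x y : List (Fin m)} (s' : List (Fin m)) (h : Step x y) :
    Step (x ++ s') (y ++ s') := by
  obtain ⟨p, s, hh⟩ := h
  refine ⟨p, s ++ s', ?_⟩
  rcases hh with ⟨a, b, hab, hx, hy⟩ | ⟨a, b, hab, hx, hy⟩
  · exact Or.inl ⟨a, b, hab, by simp [hx], by simp [hy]⟩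
  · exact Or.inr ⟨a, b, hab, by simp [hx], by simp [hy]⟩

lemma Rel.append_right {x y : List (Fin m)} (s : List (Fin m)) (h : Rel x y) :
    Rel (x ++ s) (y ++ s) :=
  Relation.ReflTransGen.lift (· ++ s) (fun _ _ hs => hs.append_right s) _ _ h

lemma Rel.append_left {x y : List (Fin m)} (p : List (Fin m)) (h : Rel x y) :
    Rel (p ++ x) (p ++ y) := by
  induction p with
  | nil => simpa
  | cons c p ih => exact ih.cons c

lemma Rel.append {x y x' y' : List (Fin m)} (h : Rel x y) (h' : Rel x' y') :
    Rel (x ++ x') (y ++ y') :=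
  (h.append_right x').trans (Rel.append_left y h')

lemma rel_swap {a b : Fin m} (h : Com a b) (s : List (Fin m)) :
    Rel (a :: b :: s) (b :: a :: s) :=
  Relation.ReflTransGen.single ⟨[], s, Or.inl ⟨a, b, h, rfl, rfl⟩⟩

lemma rel_braid {a b : Fin m} (h : Adj a b) (s : List (Fin m)) :
    Rel (a :: b :: a :: s) (b :: a :: b :: s) :=
  Relation.ReflTransGen.single ⟨[], s, Or.inr ⟨a, b, h, rfl, rfl⟩⟩

end BraidAux


namespace BraidAux
variable {m : ℕ}

/-- The trichotomy conclusion of the key peeling lemma. -/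
def Disj (a : Fin m) (u : List (Fin m)) (b : Fin m) (v : List (Fin m)) : Prop :=
  (a = b ∧ Rel u v) ∨
  (Adj a b ∧ ∃ w, Rel u (b :: a :: w) ∧ Rel v (a :: b :: w)) ∨
  (Com a b ∧ ∃ w, Rel u (b :: w) ∧ Rel v (a :: w))

lemma Disj.of_rel_left {a b : Fin m} {u u' v : List (Fin m)} (h : Rel u u')
    (hd : Disj a u' b v) : Disj a u b v := by
  rcases hd with ⟨he, hr⟩ | ⟨ha, w, h1, h2⟩ | ⟨hc, w, h1, h2⟩
  · exact Or.inl ⟨he, h.trans hr⟩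
  · exact Or.inr (Or.inl ⟨ha, w, h.trans h1, h2⟩)
  · exact Or.inr (Or.inr ⟨hc, w, h.trans h1, h2⟩)

section cases
variable {v : List (Fin m)} {b : Fin m}
  (peelE : ∀ (u' v' : List (Fin m)) (c : Fin m), v'.length < v.length →
    Rel (c :: u') (c :: v') → Rel u' v')
  (peelA : ∀ (u' v' : List (Fin m)) (a' b' : Fin m), v'.length < v.length →
    Adj a' b' → Rel (a' :: u') (b' :: v') →
    ∃ w, Rel u' (b' :: a' :: w) ∧ Rel v' (a' :: b' :: w))
  (peelC : ∀ (u' v' : List (Fin m)) (a' b' : Fin m), v'.length < v.length →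
    Com a' b' → Rel (a' :: u') (b' :: v') →
    ∃ w, Rel u' (b' :: w) ∧ Rel v' (a' :: w))

include peelE peelA peelC in
lemma caseB1 {a c : Fin m} {s : List (Fin m)}
    (hac : Com a c) (hlen : s.length + 1 = v.length)
    (hd : Disj c (a :: s) b v) : Disj a (c :: s) b v := by
  rcases hd with ⟨rfl, h1⟩ | ⟨hcb, w₁, h1, h2⟩ | ⟨hcb, w₁, h1, h2⟩
  -- c = b
  · rcases trich a c with rfl | hab | hab
    · exact absurd rfl hac.ne
    · exact (not_adj_com hab hac).elim
    · exact Or.inr (Or.inr ⟨hab, s, Rel.refl' _, h1.symm⟩)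
  -- Adj c b
  · have hL1 := h1.length
    simp only [List.length_cons] at hL1
    rcases trich a b with rfl | hab | hab
    · exact (not_adj_com hcb.symm' hac).elim
    · obtain ⟨w₂, g1, g2⟩ := peelA s (c :: w₁) a b (by simp only [List.length_cons]; omega) hab h1
      have hL2 := g2.length
      simp only [List.length_cons] at hL2
      obtain ⟨w₃, g3, g4⟩ := peelC w₁ (b :: w₂) c a (by simp only [List.length_cons]; omega)
        hac.symm' g2
      have hL4 := g4.length
      simp only [List.length_cons] at hL4
      obtain ⟨w₄, g5, g6⟩ := peelA w₂ w₃ b c (by omega) hcb.symm' g4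
      refine Or.inr (Or.inl ⟨hab, c :: b :: a :: w₄, ?_, ?_⟩)
      · exact ((((Rel.cons c g1).trans
          (Rel.cons c (Rel.cons b (Rel.cons a g5)))).trans
          (Rel.cons c (Rel.cons b (rel_swap hac (b :: w₄))))).trans
          (rel_braid hcb (a :: b :: w₄))).trans
          ((Rel.cons b (Rel.cons c (rel_braid hab.symm' w₄))).trans
           (Rel.cons b (rel_swap hac.symm' (b :: a :: w₄))))
      · exact ((((h2.trans (Rel.cons c (Rel.cons b g3))).trans
          (Rel.cons c (Rel.cons b (Rel.cons a g6)))).trans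
          (Rel.cons c (rel_braid hab.symm' (c :: w₄)))).trans
          (rel_swap hac.symm' (b :: a :: c :: w₄))).trans
          ((Rel.cons a (Rel.cons c (Rel.cons b (rel_swap hac w₄)))).trans
           (Rel.cons a (rel_braid hcb (a :: w₄))))
    · obtain ⟨w₂, g1, g2⟩ := peelC s (c :: w₁) a b (by simp only [List.length_cons]; omega) hab h1
      have hL2 := g2.length
      simp only [List.length_cons] at hL2
      obtain ⟨w₃, g3, g4⟩ := peelC w₁ w₂ c a (by omega) hac.symm' g2
      refine Or.inr (Or.inr ⟨hab, c :: b :: w₃, ?_, ?_⟩)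
      · exact ((Rel.cons c g1).trans (Rel.cons c (Rel.cons b g4))).trans (rel_braid hcb w₃)
      · exact (((h2.trans (Rel.cons c (Rel.cons b g3))).trans
          (Rel.cons c (rel_swap hab.symm' w₃)))).trans (rel_swap hac.symm' (b :: w₃))
  -- Com c b
  · have hL1 := h1.length
    simp only [List.length_cons] at hL1
    rcases trich a b with rfl | hab | hab
    · have g := peelE s w₁ a (by omega) h1
      exact Or.inl ⟨rfl, (Rel.cons c g).trans h2.symm⟩
    · obtain ⟨w₂, g1, g2⟩ := peelA s w₁ a b (by omega) hab h1
      refine Or.inr (Or.inl ⟨hab, c :: w₂, ?_, ?_⟩)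
      · exact ((Rel.cons c g1).trans (rel_swap hcb (a :: w₂))).trans
          (Rel.cons b (rel_swap hac.symm' w₂))
      · exact ((h2.trans (Rel.cons c g2)).trans (rel_swap hac.symm' (b :: w₂))).trans
          (Rel.cons a (rel_swap hcb w₂))
    · obtain ⟨w₂, g1, g2⟩ := peelC s w₁ a b (by omega) hab h1
      refine Or.inr (Or.inr ⟨hab, c :: w₂, ?_, ?_⟩)
      · exact (Rel.cons c g1).trans (rel_swap hcb w₂)
      · exact (h2.trans (Rel.cons c g2)).trans (rel_swap hac.symm' w₂)

include peelE peelA peelC in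
lemma caseB2 {a c : Fin m} {s : List (Fin m)}
    (hac : Adj a c) (hlen : s.length + 2 = v.length)
    (hd : Disj c (a :: c :: s) b v) : Disj a (c :: a :: s) b v := by
  rcases hd with ⟨rfl, h1⟩ | ⟨hcb, w₁, h1, h2⟩ | ⟨hcb, w₁, h1, h2⟩
  -- c = b
  · rcases trich a c with rfl | hab | hab
    · exact absurd rfl hac.ne
    · exact Or.inr (Or.inl ⟨hab, s, Rel.refl' _, h1.symm⟩)
    · exact (not_adj_com hac hab).elim
  -- Adj c b
  · have hL1 := h1.length
    simp only [List.length_cons] at hL1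
    rcases trich a b with rfl | hab | hab
    · have g := peelE (c :: s) (c :: w₁) a (by simp only [List.length_cons]; omega) h1
      have g' := peelE s w₁ c (by omega) g
      exact Or.inl ⟨rfl, (Rel.cons c (Rel.cons a g')).trans h2.symm⟩
    · exact (adj_adj_adj hac hcb hab).elim
    · obtain ⟨w₂, g1, g2⟩ := peelC (c :: s) (c :: w₁) a b
        (by simp only [List.length_cons]; omega) hab h1
      have hL2 := g2.length
      simp only [List.length_cons] at hL2
      obtain ⟨w₃, g3, g4⟩ := peelA s w₂ c b (by omega) hcb g1
      have hL4 := g4.length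
      simp only [List.length_cons] at hL4
      obtain ⟨w₄, g5, g6⟩ := peelA w₁ w₂ c a (by omega) hac.symm' g2
      have hL6 := g6.length
      simp only [List.length_cons] at hL6
      have g7 : Rel (c :: b :: w₃) (c :: a :: w₄) := g4.symm.trans g6
      have g8 : Rel (b :: w₃) (a :: w₄) := peelE (b :: w₃) (a :: w₄) c
        (by simp only [List.length_cons]; omega) g7
      obtain ⟨w₅, g9, g10⟩ := peelC w₃ w₄ b a (by omega) hab.symm' g8
      refine Or.inr (Or.inr ⟨hab, c :: a :: b :: c :: w₅, ?_, ?_⟩)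
      · exact ((((Rel.cons c (Rel.cons a g3)).trans
          (Rel.cons c (Rel.cons a (Rel.cons b (Rel.cons c g9))))).trans
          (Rel.cons c (rel_swap hab (c :: a :: w₅)))).trans
          (Rel.cons c (Rel.cons b (rel_braid hac w₅)))).trans
          ((rel_braid hcb (a :: c :: w₅)).trans
           (Rel.cons b (Rel.cons c (rel_swap hab.symm' (c :: w₅)))))
      · exact ((((h2.trans (Rel.cons c (Rel.cons b g5))).trans
          (Rel.cons c (Rel.cons b (Rel.cons a (Rel.cons c g10))))).trans
          (Rel.cons c (rel_swap hab.symm' (c :: b :: w₅)))).trans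
          (Rel.cons c (Rel.cons a (rel_braid hcb.symm' w₅)))).trans
          (rel_braid hac.symm' (b :: c :: w₅))
  -- Com c b
  · have hL1 := h1.length
    simp only [List.length_cons] at hL1
    rcases trich a b with rfl | hab | hab
    · exact (not_adj_com hac hcb.symm').elim
    · obtain ⟨w₂, g1, g2⟩ := peelA (c :: s) w₁ a b (by omega) hab h1
      have hL2 := g2.length
      simp only [List.length_cons] at hL2
      obtain ⟨w₃, g3, g4⟩ := peelC s (a :: w₂) c b (by simp only [List.length_cons]; omega) hcb g1
      have hL4 := g4.length
      simp only [List.length_cons] at hL4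
      obtain ⟨w₄, g5, g6⟩ := peelA w₂ w₃ a c (by omega) hac g4
      refine Or.inr (Or.inl ⟨hab, c :: a :: b :: w₄, ?_, ?_⟩)
      · exact ((((Rel.cons c (Rel.cons a g3)).trans
          (Rel.cons c (Rel.cons a (Rel.cons b g6)))).trans
          (Rel.cons c (rel_braid hab (c :: w₄)))).trans
          (rel_swap hcb (a :: b :: c :: w₄))).trans
          ((Rel.cons b (Rel.cons c (Rel.cons a (rel_swap hcb.symm' w₄)))).trans
           (Rel.cons b (rel_braid hac.symm' (b :: w₄))))
      · exact ((((h2.trans (Rel.cons c g2)).trans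
          (Rel.cons c (Rel.cons a (Rel.cons b g5)))).trans
          (Rel.cons c (Rel.cons a (rel_swap hcb.symm' (a :: w₄))))).trans
          (rel_braid hac.symm' (b :: a :: w₄))).trans
          ((Rel.cons a (Rel.cons c (rel_braid hab w₄))).trans
           (Rel.cons a (rel_swap hcb (a :: b :: w₄))))
    · obtain ⟨w₂, g1, g2⟩ := peelC (c :: s) w₁ a b (by omega) hab h1
      have hL2 := g2.length
      simp only [List.length_cons] at hL2
      obtain ⟨w₃, g3, g4⟩ := peelC s w₂ c b (by omega) hcb g1
      refine Or.inr (Or.inr ⟨hab, c :: a :: w₃, ?_, ?_⟩)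
      · exact (((Rel.cons c (Rel.cons a g3)).trans
          (Rel.cons c (rel_swap hab w₃)))).trans (rel_swap hcb (a :: w₃))
      · exact ((h2.trans (Rel.cons c g2)).trans
          (Rel.cons c (Rel.cons a g4))).trans (rel_braid hac.symm' w₃)

end cases
end BraidAux


namespace BraidAux
variable {m : ℕ}

theorem key : ∀ ℓ : ℕ, ∀ (v : List (Fin m)) (b : Fin m), v.length < ℓ →
    ∀ x, Rel x (b :: v) → ∀ a u, x = a :: u → Disj a u b v := by
  intro ℓ
  induction ℓ using Nat.strong_induction_on with
  | _ ℓ IH =>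
  intro v b hv x hx
  have peelD : ∀ (u' v' : List (Fin m)) (a' b' : Fin m), v'.length < v.length →
      Rel (a' :: u') (b' :: v') → Disj a' u' b' v' := fun u' v' a' b' hlen hr =>
    IH v.length hv v' b' hlen _ hr _ _ rfl
  have peelE : ∀ (u' v' : List (Fin m)) (c : Fin m), v'.length < v.length →
      Rel (c :: u') (c :: v') → Rel u' v' := by
    intro u' v' c hlen hr
    rcases peelD u' v' c c hlen hr with ⟨_, h⟩ | ⟨ha, _⟩ | ⟨hc, _⟩
    · exact h
    · exact absurd rfl ha.ne
    · exact absurd rfl hc.ne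
  have peelA : ∀ (u' v' : List (Fin m)) (a' b' : Fin m), v'.length < v.length →
      Adj a' b' → Rel (a' :: u') (b' :: v') →
      ∃ w, Rel u' (b' :: a' :: w) ∧ Rel v' (a' :: b' :: w) := by
    intro u' v' a' b' hlen hab hr
    rcases peelD u' v' a' b' hlen hr with ⟨he, _⟩ | ⟨_, hw⟩ | ⟨hc, _⟩
    · exact absurd he hab.ne
    · exact hw
    · exact (not_adj_com hab hc).elim
  have peelC : ∀ (u' v' : List (Fin m)) (a' b' : Fin m), v'.length < v.length →
      Com a' b' → Rel (a' :: u') (b' :: v') →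
      ∃ w, Rel u' (b' :: w) ∧ Rel v' (a' :: w) := by
    intro u' v' a' b' hlen hab hr
    rcases peelD u' v' a' b' hlen hr with ⟨he, _⟩ | ⟨ha, _⟩ | ⟨_, hw⟩
    · exact absurd he hab.ne
    · exact (not_adj_com ha hab).elim
    · exact hw
  clear peelD
  induction hx using Relation.ReflTransGen.head_induction_on with
  | refl =>
    rintro a u h
    injection h with h1 h2
    subst h1
    subst h2
    exact Or.inl ⟨rfl, Rel.refl' _⟩
  | head hstep hrest ih =>
    rintro a u rfl
    obtain ⟨p, s, hh⟩ := hstep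
    cases p with
    | nil =>
      rcases hh with ⟨a₁, b₁, hab, hx, hy⟩ | ⟨a₁, b₁, hab, hx, hy⟩
      · simp only [List.nil_append] at hx hy
        injection hx with e1 e2
        subst e1
        subst e2
        subst hy
        have hL := Rel.length hrest
        simp only [List.length_cons] at hL
        have hd := ih b₁ (a :: s) rfl
        exact caseB1 peelE peelA peelC hab (by omega) hd
      · simp only [List.nil_append] at hx hy
        injection hx with e1 e2
        subst e1
        subst e2
        subst hy
        have hL := Rel.length hrest
        simp only [List.length_cons] at hL
        have hd := ih b₁ (a :: b₁ :: s) rfl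
        exact caseB2 peelE peelA peelC hab (by omega) hd
    | cons c p' =>
      rcases hh with ⟨a₁, b₁, hab, hx, hy⟩ | ⟨a₁, b₁, hab, hx, hy⟩
      · simp only [List.cons_append] at hx hy
        injection hx with e1 e2
        subst e1
        subst e2
        subst hy
        have hd := ih a (p' ++ b₁ :: a₁ :: s) rfl
        exact Disj.of_rel_left
          (Relation.ReflTransGen.single ⟨p', s, Or.inl ⟨a₁, b₁, hab, rfl, rfl⟩⟩) hd
      · simp only [List.cons_append] at hx hy
        injection hx with e1 e2
        subst e1
        subst e2
        subst hy
        have hd := ih a (p' ++ b₁ :: a₁ :: b₁ :: s) rfl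
        exact Disj.of_rel_left
          (Relation.ReflTransGen.single ⟨p', s, Or.inr ⟨a₁, b₁, hab, rfl, rfl⟩⟩) hd

lemma rel_peel_eq {c : Fin m} {u v : List (Fin m)} (h : Rel (c :: u) (c :: v)) : Rel u v := by
  rcases key (v.length + 1) v c (Nat.lt_succ_self _) _ h _ _ rfl with
    ⟨_, h⟩ | ⟨ha, _⟩ | ⟨hc, _⟩
  · exact h
  · exact absurd rfl ha.ne
  · exact absurd rfl hc.ne

lemma rel_peel_adj {a b : Fin m} {u v : List (Fin m)} (hab : Adj a b)
    (h : Rel (a :: u) (b :: v)) : ∃ w, Rel u (b :: a :: w) ∧ Rel v (a :: b :: w) := by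
  rcases key (v.length + 1) v b (Nat.lt_succ_self _) _ h _ _ rfl with
    ⟨he, _⟩ | ⟨_, hw⟩ | ⟨hc, _⟩
  · exact absurd he hab.ne
  · exact hw
  · exact (not_adj_com hab hc).elim

lemma claim {i j : Fin m} (hij : Adj i j) : ∀ k, 1 ≤ k → ∀ W W' : List (Fin m),
    Rel (List.replicate k i ++ j :: W) (j :: W') → ∃ W'', Rel W (i :: W'') := by
  intro k
  induction k with
  | zero => omega
  | succ k ihk =>
    intro _ W W' h
    by_cases hk : k = 0
    · subst hk
      simp only [List.replicate_succ, List.replicate_zero, List.nil_append,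
        List.cons_append] at h
      obtain ⟨w, hw1, _⟩ := rel_peel_adj hij h
      exact ⟨w, rel_peel_eq hw1⟩
    · rw [List.replicate_succ, List.cons_append] at h
      obtain ⟨w, hw1, _⟩ := rel_peel_adj hij h
      exact ihk (by omega) W (i :: w) hw1

end BraidAux


namespace BraidAux
variable {m : ℕ}

lemma rel_of_conGen {x y : FreeMonoid (Fin m)} (h : conGen (braidMonoidRels m) x y) :
    Rel (FreeMonoid.toList x) (FreeMonoid.toList y) := by
  induction h with
  | of x y h =>
    obtain ⟨i, j, ⟨hle, hx, hy⟩ | ⟨hle, hx, hy⟩⟩ := h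
    · subst hx; subst hy
      exact rel_swap (Or.inl hle) []
    · subst hx; subst hy
      exact rel_braid (Or.inl hle.symm) []
  | refl x => exact Rel.refl' _
  | symm _ ih => exact ih.symm
  | trans _ _ ih1 ih2 => exact ih1.trans ih2
  | mul _ _ ih1 ih2 => exact ih1.append ih2

lemma conGen_of_step {x y : List (Fin m)} (h : Step x y) :
    conGen (braidMonoidRels m) (FreeMonoid.ofList x) (FreeMonoid.ofList y) := by
  obtain ⟨p, s, hh⟩ := h
  have hmid : ∀ x' y' : List (Fin m),
      conGen (braidMonoidRels m) (FreeMonoid.ofList x') (FreeMonoid.ofList y') →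
      conGen (braidMonoidRels m) (FreeMonoid.ofList (p ++ x' ++ s))
        (FreeMonoid.ofList (p ++ y' ++ s)) := by
    intro x' y' hc
    have h1 : FreeMonoid.ofList (p ++ x' ++ s) =
        FreeMonoid.ofList p * FreeMonoid.ofList x' * FreeMonoid.ofList s := rfl
    have h2 : FreeMonoid.ofList (p ++ y' ++ s) =
        FreeMonoid.ofList p * FreeMonoid.ofList y' * FreeMonoid.ofList s := rfl
    rw [h1, h2]
    exact (conGen (braidMonoidRels m)).mul
      ((conGen (braidMonoidRels m)).mul ((conGen (braidMonoidRels m)).refl _) hc)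
      ((conGen (braidMonoidRels m)).refl _)
  rcases hh with ⟨a, b, hab, hx, hy⟩ | ⟨a, b, hab, hx, hy⟩
  · subst hx; subst hy
    have := hmid [a, b] [b, a] ?_
    · simpa using this
    rcases hab with h | h
    · exact ConGen.Rel.of _ _ ⟨a, b, Or.inl ⟨h, rfl, rfl⟩⟩
    · exact ConGen.Rel.symm (ConGen.Rel.of _ _ ⟨b, a, Or.inl ⟨h, rfl, rfl⟩⟩)
  · subst hx; subst hy
    have := hmid [a, b, a] [b, a, b] ?_
    · simpa using this
    rcases hab with h | h
    · exact ConGen.Rel.of _ _ ⟨a, b, Or.inr ⟨h.symm, rfl, rfl⟩⟩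
    · exact ConGen.Rel.symm (ConGen.Rel.of _ _ ⟨b, a, Or.inr ⟨h.symm, rfl, rfl⟩⟩)

lemma conGen_of_rel {x y : List (Fin m)} (h : Rel x y) :
    conGen (braidMonoidRels m) (FreeMonoid.ofList x) (FreeMonoid.ofList y) := by
  induction h with
  | refl => exact (conGen (braidMonoidRels m)).refl _
  | tail _ hs ih => exact (conGen (braidMonoidRels m)).trans ih (conGen_of_step hs)

lemma toList_pow (i : Fin m) (k : ℕ) :
    FreeMonoid.toList (FreeMonoid.of i ^ k) = List.replicate k i := by
  induction k with
  | zero => rfl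
  | succ k ih =>
    rw [pow_succ', List.replicate_succ, ← ih]
    rfl

end BraidAux


/-- In the braid monoid, if `|i - j| = 1`, `k ≥ 1`, and `σⱼ` left-divides `σᵢᵏ σⱼ w`,
then `σᵢ` left-divides `w`. -/
theorem braidMonoid_left_dvd_of_left_dvd_pow (n : ℕ) (hn : 2 ≤ n) (i j : Fin (n - 1))
    (hij : (i : ℕ) + 1 = (j : ℕ) ∨ (j : ℕ) + 1 = (i : ℕ)) (k : ℕ) (hk : 1 ≤ k)
    (w : BraidMonoid n)
    (h : ∃ w', braidMonGen n i ^ k * braidMonGen n j * w = braidMonGen n j * w') :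
    ∃ w'', w = braidMonGen n i * w'' := by

  obtain ⟨w', hw⟩ := h
  obtain ⟨W, rfl⟩ : ∃ W, PresentedMonoid.mk (braidMonoidRels (n - 1)) W = w :=
    PresentedMonoid.surjective_mk w
  obtain ⟨W', rfl⟩ : ∃ W', PresentedMonoid.mk (braidMonoidRels (n - 1)) W' = w' :=
    PresentedMonoid.surjective_mk w'
  have hmk : PresentedMonoid.mk (braidMonoidRels (n - 1))
      (FreeMonoid.of i ^ k * FreeMonoid.of j * W) =
      PresentedMonoid.mk (braidMonoidRels (n - 1)) (FreeMonoid.of j * W') := by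
    rw [map_mul, map_mul, map_pow, map_mul]
    exact hw
  have hcon : conGen (braidMonoidRels (n - 1)) (FreeMonoid.of i ^ k * FreeMonoid.of j * W)
      (FreeMonoid.of j * W') := Quotient.exact hmk
  have hrel := BraidAux.rel_of_conGen hcon
  have hL : FreeMonoid.toList (FreeMonoid.of i ^ k * FreeMonoid.of j * W) =
      List.replicate k i ++ j :: FreeMonoid.toList W := by
    rw [FreeMonoid.toList_mul, FreeMonoid.toList_mul, BraidAux.toList_pow,
      FreeMonoid.toList_of, List.append_assoc, List.singleton_append]
  rw [hL] at hrel
  have hadj : BraidAux.Adj i j := hij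
  obtain ⟨W'', hW⟩ := BraidAux.claim hadj k hk (FreeMonoid.toList W)
    (FreeMonoid.toList W') hrel
  refine ⟨PresentedMonoid.mk (braidMonoidRels (n - 1)) (FreeMonoid.ofList W''), ?_⟩
  have := BraidAux.conGen_of_rel hW
  exact Quotient.sound this
end
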